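/- arXiv:2310.16381 — 3 statements merged into one kernel-verified Lean document; each statement's English description precedes it below -/
import Mathlib

section
/- Let a : ℤ → ℂ be not generic. Then a^⊥ is a nonzero subspace of V of finite codimension, and this codimension equals m, where m is the minimal value of ω(v) over all nonzero v ∈ a^⊥. -/
/-- For `x : ℤ → ℂ` and `n : ℤ`, the shift `x^{(n)}` is `i ↦ x (i + n)`. -/
def shiftFun (a : ℤ → ℂ) (n : ℤ) : ℤ → ℂ := fun i => a (i + n)

/-- The shift of a finitely supported function `v : ℤ →₀ ℂ`, as a linear map:
`(shiftVL n v) i = v (i + n)`. -/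
noncomputable def shiftVL (n : ℤ) : (ℤ →₀ ℂ) →ₗ[ℂ] (ℤ →₀ ℂ) :=
  (Finsupp.domLCongr (Equiv.addRight n).symm).toLinearMap

/-- `a^⊥`: the subspace of all `v ∈ ℤ →₀ ℂ` such that `⟨a, v^{(n)}⟩ = 0` for all
`n ∈ ℤ`, where `⟨a, w⟩ = ∑ i, a i * w i`. -/
noncomputable def perp (a : ℤ → ℂ) : Submodule ℂ (ℤ →₀ ℂ) :=
  ⨅ n : ℤ, LinearMap.ker ((Finsupp.linearCombination ℂ a).comp (shiftVL n))

/-- `ω(v) = r(v) - l(v)`, the difference between the maximum and the minimum of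
the support of `v` (junk value `0` for `v = 0`). -/
noncomputable def omegaV (v : ℤ →₀ ℂ) : ℕ :=
  ((WithBot.unbotD 0 v.support.max) - (WithTop.untopD 0 v.support.min)).toNat

/-- The fundamental linear map whose kernel is `perp a`. -/
noncomputable def Phi (a : ℤ → ℂ) : (ℤ →₀ ℂ) →ₗ[ℂ] (ℤ → ℂ) :=
  Finsupp.linearCombination ℂ (shiftFun a)

lemma Phi_apply (a : ℤ → ℂ) (v : ℤ →₀ ℂ) (s : ℤ) :
    Phi a v s = ∑ j ∈ v.support, v j * a (s + j) := by
  simp only [Phi, Finsupp.linearCombination_apply, Finsupp.sum]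
  rw [Finset.sum_apply]
  simp [shiftFun]

lemma perp_eq_ker (a : ℤ → ℂ) : perp a = LinearMap.ker (Phi a) := by
  ext v
  simp only [perp, Submodule.mem_iInf, LinearMap.mem_ker, LinearMap.coe_comp,
    Function.comp_apply]
  have key : ∀ n : ℤ, Finsupp.linearCombination ℂ a (shiftVL n v)
      = Phi a v (-n) := by
    intro n
    have : shiftVL n v = Finsupp.equivMapDomain (Equiv.addRight n).symm v := rfl
    rw [this, Finsupp.linearCombination_equivMapDomain]
    rw [Phi_apply, Finsupp.linearCombination_apply, Finsupp.sum]
    apply Finset.sum_congr rfl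
    intro j _
    simp only [Function.comp, Equiv.coe_addRight, Equiv.addRight_symm, smul_eq_mul]
    ring_nf
  constructor
  · intro h
    funext s
    have := h (-s)
    rw [key] at this
    simpa using this
  · intro h n
    rw [key, h]
    rfl

/-- If `a : ℤ → ℂ` is not generic, then `a^⊥` is a nonzero subspace of `ℤ →₀ ℂ`
of finite codimension, equal to the minimal value `m` of `ω(v)` over all
nonzero `v ∈ a^⊥`. -/
theorem perp_nonzero_and_finite_codimension (a : ℤ → ℂ)
    (ha : ¬ LinearIndependent ℂ (fun n : ℤ => shiftFun a n)) :
    perp a ≠ ⊥ ∧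
    ∃ m : ℕ, IsLeast {k : ℕ | ∃ v ∈ perp a, v ≠ 0 ∧ omegaV v = k} m ∧
      ∃ _ : FiniteDimensional ℂ ((ℤ →₀ ℂ) ⧸ perp a),
        Module.finrank ℂ ((ℤ →₀ ℂ) ⧸ perp a) = m := by
  classical
  -- a nonzero element of perp a
  rw [linearIndependent_iff] at ha
  push_neg at ha
  obtain ⟨c, hc0, hcne⟩ := ha
  have hcperp : c ∈ perp a := by rw [perp_eq_ker]; exact hc0
  have hperp_ne : perp a ≠ ⊥ := by
    intro h
    rw [h, Submodule.mem_bot] at hcperp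
    exact hcne hcperp
  refine ⟨hperp_ne, ?_⟩
  -- the set S and its minimum m
  set S : Set ℕ := {k : ℕ | ∃ v ∈ perp a, v ≠ 0 ∧ omegaV v = k} with hS
  have hSne : S.Nonempty := ⟨omegaV c, c, hcperp, hcne, rfl⟩
  set m : ℕ := sInf S with hm
  have hmem : m ∈ S := Nat.sInf_mem hSne
  have hleast : IsLeast S m := ⟨hmem, fun k hk => Nat.sInf_le hk⟩
  obtain ⟨v₀, hv₀perp, hv₀ne, hv₀om⟩ := hmem
  have hv₀supp : v₀.support.Nonempty := Finsupp.support_nonempty_iff.mpr hv₀ne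
  set l : ℤ := v₀.support.min' hv₀supp with hl
  set r : ℤ := v₀.support.max' hv₀supp with hr
  have hlr : l ≤ r := Finset.min'_le _ _ (v₀.support.max'_mem hv₀supp)
  have homega : ∀ (v : ℤ →₀ ℂ) (h : v.support.Nonempty),
      omegaV v = (v.support.max' h - v.support.min' h).toNat := by
    intro v h
    rw [omegaV, ← Finset.coe_max' h, ← Finset.coe_min' h]
    rfl
  have hmZ : (m : ℤ) = r - l := by
    rw [← hv₀om, homega v₀ hv₀supp, ← hl, ← hr]
    exact Int.toNat_of_nonneg (by omega)
  have hv₀l : v₀ l ≠ 0 := Finsupp.mem_support_iff.mp (v₀.support.min'_mem hv₀supp)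
  have hv₀r : v₀ r ≠ 0 := Finsupp.mem_support_iff.mp (v₀.support.max'_mem hv₀supp)
  have hPhiv₀ : Phi a v₀ = 0 := by rw [perp_eq_ker] at hv₀perp; exact hv₀perp
  have hrec0 : ∀ s : ℤ, ∑ j ∈ v₀.support, v₀ j * a (s + j) = 0 := by
    intro s
    rw [← Phi_apply, hPhiv₀]; rfl
  -- every element of the range of Phi satisfies the recurrence given by v₀
  set W : Submodule ℂ (ℤ → ℂ) := LinearMap.range (Phi a) with hW
  have hWspan : W = Submodule.span ℂ (Set.range (shiftFun a)) :=
    Finsupp.range_linearCombination ..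
  have hrecW : ∀ x ∈ W, ∀ i : ℤ, ∑ j ∈ v₀.support, v₀ j * x (i + j) = 0 := by
    intro x hx
    rw [hWspan] at hx
    induction hx using Submodule.span_induction with
    | mem x hx =>
      obtain ⟨n, rfl⟩ := hx
      intro i
      have := hrec0 (i + n)
      rw [← this]
      apply Finset.sum_congr rfl
      intro j _
      simp only [shiftFun]
      ring_nf
    | zero => intro i; simp
    | add x y _ _ hx hy =>
      intro i
      simp only [Pi.add_apply, mul_add]
      rw [Finset.sum_add_distrib, hx i, hy i, add_zero]
    | smul t x _ hx =>
      intro i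
      simp only [Pi.smul_apply, smul_eq_mul]
      calc ∑ j ∈ v₀.support, v₀ j * (t * x (i + j))
          = t * ∑ j ∈ v₀.support, v₀ j * x (i + j) := by
            rw [Finset.mul_sum]; apply Finset.sum_congr rfl; intros; ring
        _ = 0 := by rw [hx i, mul_zero]
  -- vanishing lemma: an element of W vanishing on the window [0, m) is zero
  have hvanish : ∀ x ∈ W, (∀ k : ℤ, 0 ≤ k → k < (m : ℤ) → x k = 0) → x = 0 := by
    intro x hx hwin
    have hband : ∀ K : ℕ, ∀ n : ℤ, -(K : ℤ) ≤ n → n < (m : ℤ) + K → x n = 0 := by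
      intro K
      induction K with
      | zero => intro n h1 h2; exact hwin n (by omega) (by omega)
      | succ K ih =>
        intro n h1 h2
        by_cases hcase : -(K : ℤ) ≤ n ∧ n < (m : ℤ) + K
        · exact ih n hcase.1 hcase.2
        · push_neg at hcase
          rcases le_or_gt (-(K:ℤ)) n with hge | hlt
          · -- n = m + K : use the top coefficient
            have hn : n = (m : ℤ) + K := by omega
            have hrec := hrecW x hx (n - r)
            rw [← Finset.add_sum_erase _ _ (v₀.support.max'_mem hv₀supp)] at hrec
            have hz : ∀ j ∈ v₀.support.erase r, v₀ j * x (n - r + j) = 0 := by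
              intro j hj
              have hjr : j ≠ r := Finset.ne_of_mem_erase hj
              have hjs : j ∈ v₀.support := Finset.mem_of_mem_erase hj
              have hjl : l ≤ j := Finset.min'_le _ _ hjs
              have hjr' : j ≤ r := Finset.le_max' _ _ hjs
              rw [ih (n - r + j) (by omega) (by omega), mul_zero]
            rw [Finset.sum_eq_zero hz, add_zero] at hrec
            have : x (n - r + r) = 0 := by
              rcases mul_eq_zero.mp hrec with h | h
              · exact absurd h hv₀r
              · exact h
            simpa using this
          · -- n = -(K+1) : use the bottom coefficient
            have hrec := hrecW x hx (n - l)
            rw [← Finset.add_sum_erase _ _ (v₀.support.min'_mem hv₀supp)] at hrec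
            have hz : ∀ j ∈ v₀.support.erase l, v₀ j * x (n - l + j) = 0 := by
              intro j hj
              have hjl : j ≠ l := Finset.ne_of_mem_erase hj
              have hjs : j ∈ v₀.support := Finset.mem_of_mem_erase hj
              have hjl' : l ≤ j := Finset.min'_le _ _ hjs
              have hjr : j ≤ r := Finset.le_max' _ _ hjs
              rw [ih (n - l + j) (by omega) (by omega), mul_zero]
            rw [Finset.sum_eq_zero hz, add_zero] at hrec
            have : x (n - l + l) = 0 := by
              rcases mul_eq_zero.mp hrec with h | h
              · exact absurd h hv₀l
              · exact h
            simpa using this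
    funext n
    exact hband (n.natAbs + m + 1) n (by omega) (by omega)
  -- the m window shifts are linearly independent
  have hindep : LinearIndependent ℂ (fun k : Fin m => shiftFun a (k : ℤ)) := by
    by_contra hdep
    rw [Fintype.not_linearIndependent_iff] at hdep
    obtain ⟨g, hg, k₀, hk₀⟩ := hdep
    set cc : ℤ →₀ ℂ := ∑ k : Fin m, Finsupp.single (k : ℤ) (g k) with hcc
    have hPhicc : Phi a cc = 0 := by
      rw [hcc, map_sum]
      rw [← hg]
      apply Finset.sum_congr rfl
      intro k _
      exact Finsupp.linearCombination_single (R := ℂ) (v := shiftFun a) (g k) ((k : ℕ) : ℤ)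
    have hccval : ∀ k₁ : Fin m, cc (k₁ : ℤ) = g k₁ := by
      intro k₁
      rw [hcc, Finsupp.finset_sum_apply]
      rw [Finset.sum_eq_single k₁]
      · rw [Finsupp.single_apply, if_pos rfl]
      · intro b _ hb
        rw [Finsupp.single_apply, if_neg]
        simpa [Fin.val_eq_val] using hb
      · simp
    have hccne : cc ≠ 0 := by
      intro h
      apply hk₀
      rw [← hccval k₀, h]
      rfl
    have hccsupp : ∀ j ∈ cc.support, 0 ≤ j ∧ j < (m : ℤ) := by
      intro j hj
      have := Finsupp.support_finset_sum hj
      simp only [Finset.mem_biUnion, Finset.mem_univ, true_and] at this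
      obtain ⟨k, hk⟩ := this
      have := Finsupp.support_single_subset hk
      simp only [Finset.mem_singleton] at this
      subst this
      exact ⟨Int.ofNat_nonneg _, by exact_mod_cast k.isLt⟩
    have hccW : omegaV cc < m := by
      have hsne : cc.support.Nonempty := Finsupp.support_nonempty_iff.mpr hccne
      rw [homega cc hsne]
      have h1 := hccsupp _ (cc.support.max'_mem hsne)
      have h2 := hccsupp _ (cc.support.min'_mem hsne)
      omega
    have : m ≤ omegaV cc := hleast.2 ⟨cc, by rw [perp_eq_ker]; exact hPhicc, hccne, rfl⟩
    omega
  -- W is finite dimensional of dimension exactly m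
  let ev : (ℤ → ℂ) →ₗ[ℂ] (Fin m → ℂ) := LinearMap.pi fun k => LinearMap.proj (k : ℤ)
  let ψ : W →ₗ[ℂ] (Fin m → ℂ) := ev.comp W.subtype
  have hψinj : Function.Injective ψ := by
    rw [← LinearMap.ker_eq_bot]
    rw [LinearMap.ker_eq_bot']
    rintro ⟨x, hx⟩ hψx
    have hwin : ∀ k : ℤ, 0 ≤ k → k < (m : ℤ) → x k = 0 := by
      intro k hk0 hkm
      have : ψ ⟨x, hx⟩ ⟨k.toNat, by omega⟩ = 0 := by rw [hψx]; rfl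
      simpa [ψ, ev, Int.toNat_of_nonneg hk0] using this
    have := hvanish x hx hwin
    exact Subtype.ext this
  have hWfd : FiniteDimensional ℂ W := FiniteDimensional.of_injective ψ hψinj
  have hWle : Module.finrank ℂ W ≤ m := by
    have := LinearMap.finrank_le_finrank_of_injective hψinj
    rwa [Module.finrank_fin_fun] at this
  have hWge : m ≤ Module.finrank ℂ W := by
    have hmem : ∀ k : Fin m, shiftFun a (k : ℤ) ∈ W := by
      intro k
      rw [hWspan]
      exact Submodule.subset_span ⟨k, rfl⟩
    have hind' : LinearIndependent ℂ (fun k : Fin m => (⟨shiftFun a (k : ℤ), hmem k⟩ : W)) := by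
      apply LinearIndependent.of_comp W.subtype
      exact hindep
    have := hind'.fintype_card_le_finrank
    simpa using this
  have hWrank : Module.finrank ℂ W = m := le_antisymm hWle hWge
  -- transfer to the quotient
  let e : ((ℤ →₀ ℂ) ⧸ perp a) ≃ₗ[ℂ] W :=
    (Submodule.quotEquivOfEq _ _ (perp_eq_ker a)).trans ((Phi a).quotKerEquivRange)
  have hQfd : FiniteDimensional ℂ ((ℤ →₀ ℂ) ⧸ perp a) := Module.Finite.equiv e.symm
  exact ⟨m, hleast, hQfd, by rw [e.finrank_eq, hWrank]⟩
end

section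
/- Let a : ℤ → ℂ be not generic, and let v ∈ a^⊥ be a nonzero element with ω(v) minimal among all nonzero elements of a^⊥. Then the family of all integer shifts (v^{(n)})_{n∈ℤ} is a basis of the subspace a^⊥; in particular, every element of a^⊥ is a (finite) linear combination of shifts of v, and these shifts are linearly independent. -/
/-- The shift of a finitely supported function `v : ℤ →₀ ℂ`:
`(shiftV v n) i = v (i + n)`. -/
noncomputable def shiftV (v : ℤ →₀ ℂ) (n : ℤ) : ℤ →₀ ℂ :=
  Finsupp.equivMapDomain (Equiv.addRight n).symm v

lemma shiftV_apply (v : ℤ →₀ ℂ) (n i : ℤ) : shiftV v n i = v (i + n) := rfl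
lemma shiftVL_eq (v : ℤ →₀ ℂ) (n : ℤ) : shiftVL n v = shiftV v n := rfl
lemma shiftV_shiftV (v : ℤ →₀ ℂ) (m n : ℤ) : shiftV (shiftV v m) n = shiftV v (n + m) := by
  ext i; simp [shiftV_apply, add_assoc]

lemma mem_perp {a : ℤ → ℂ} {w : ℤ →₀ ℂ} :
    w ∈ perp a ↔ ∀ n : ℤ, Finsupp.linearCombination ℂ a (shiftV w n) = 0 := by
  simp only [perp, Submodule.mem_iInf, LinearMap.mem_ker, LinearMap.comp_apply, shiftVL_eq]

lemma shift_mem_perp {a : ℤ → ℂ} {w : ℤ →₀ ℂ} (h : w ∈ perp a) (m : ℤ) :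
    shiftV w m ∈ perp a := by
  rw [mem_perp] at h ⊢
  intro n; rw [shiftV_shiftV]; exact h (n + m)

lemma omegaV_eq (w : ℤ →₀ ℂ) (h : w.support.Nonempty) :
    omegaV w = (w.support.max' h - w.support.min' h).toNat := by
  rw [omegaV, ← Finset.coe_max' h, ← Finset.coe_min' h]
  rfl

lemma eq_zero_of_lt_min' (w : ℤ →₀ ℂ) (h : w.support.Nonempty) (i : ℤ)
    (hi : i < w.support.min' h) : w i = 0 := by
  by_contra hc
  exact absurd (w.support.min'_le i (Finsupp.mem_support_iff.mpr hc)) (by omega)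

lemma eq_zero_of_max'_lt (w : ℤ →₀ ℂ) (h : w.support.Nonempty) (i : ℤ)
    (hi : w.support.max' h < i) : w i = 0 := by
  by_contra hc
  exact absurd (w.support.le_max' i (Finsupp.mem_support_iff.mpr hc)) (by omega)

/-- If `a` is not generic and `v ∈ a^⊥` is nonzero with minimal `ω(v)`, then the
integer shifts of `v` form a basis of `a^⊥`: they are linearly independent and
span `a^⊥`. -/
theorem shifts_basis_of_perp (a : ℤ → ℂ)
    (ha : ¬ LinearIndependent ℂ (fun n : ℤ => shiftFun a n))
    (v : ℤ →₀ ℂ) (hv : v ∈ perp a) (hv0 : v ≠ 0)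
    (hmin : ∀ w ∈ perp a, w ≠ 0 → omegaV v ≤ omegaV w) :
    LinearIndependent ℂ (fun n : ℤ => shiftV v n) ∧
      Submodule.span ℂ (Set.range fun n : ℤ => shiftV v n) = perp a := by
  have hvsupp : v.support.Nonempty := Finsupp.support_nonempty_iff.mpr hv0
  set Lv : ℤ := v.support.min' hvsupp with hLv
  set Rv : ℤ := v.support.max' hvsupp with hRv
  have hvLv : v Lv ≠ 0 := Finsupp.mem_support_iff.mp (v.support.min'_mem hvsupp)
  have hLvRv : Lv ≤ Rv := v.support.min'_le _ (v.support.max'_mem hvsupp)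
  constructor
  · -- linear independence
    rw [linearIndependent_iff']
    intro s g hsum
    by_contra hc
    push_neg at hc
    obtain ⟨j, hjs, hgj⟩ := hc
    set t : Finset ℤ := s.filter (fun n => g n ≠ 0) with ht
    have htne : t.Nonempty := ⟨j, Finset.mem_filter.mpr ⟨hjs, hgj⟩⟩
    set N : ℤ := t.max' htne with hN
    have hNt : N ∈ t := t.max'_mem htne
    have hNs : N ∈ s := (Finset.mem_filter.mp hNt).1
    have hgN : g N ≠ 0 := (Finset.mem_filter.mp hNt).2
    have heval : (∑ n ∈ s, g n • shiftV v n) (Lv - N) = 0 := by rw [hsum]; rfl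
    rw [Finset.sum_apply'] at heval
    have hsingle : ∑ n ∈ s, (g n • shiftV v n) (Lv - N) = g N * v Lv := by
      rw [Finset.sum_eq_single N]
      · simp only [Finsupp.smul_apply, shiftV_apply, smul_eq_mul]
        congr 2; omega
      · intro b hbs hbN
        simp only [Finsupp.smul_apply, shiftV_apply, smul_eq_mul]
        by_cases hgb : g b = 0
        · rw [hgb, zero_mul]
        · have hbt : b ∈ t := Finset.mem_filter.mpr ⟨hbs, hgb⟩
          have hbN' : b < N := lt_of_le_of_ne (t.le_max' b hbt) hbN
          rw [eq_zero_of_lt_min' v hvsupp _ (by omega), mul_zero]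
      · intro h; exact absurd hNs h
    rw [hsingle] at heval
    rcases mul_eq_zero.mp heval with h | h
    · exact hgN h
    · exact hvLv h
  · -- span = perp
    apply le_antisymm
    · rw [Submodule.span_le]
      rintro x ⟨n, rfl⟩
      exact shift_mem_perp hv n
    · -- perp ⊆ span, by strong induction on omegaV
      have key : ∀ k : ℕ, ∀ w ∈ perp a, omegaV w ≤ k →
          w ∈ Submodule.span ℂ (Set.range fun n : ℤ => shiftV v n) := by
        intro k
        induction k using Nat.strong_induction_on with
        | _ k ih =>
          intro w hw hwk
          by_cases hw0 : w = 0
          · rw [hw0]; exact Submodule.zero_mem _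
          have hwsupp : w.support.Nonempty := Finsupp.support_nonempty_iff.mpr hw0
          set L : ℤ := w.support.min' hwsupp with hL
          set R : ℤ := w.support.max' hwsupp with hR
          have hLR : L ≤ R := w.support.min'_le _ (w.support.max'_mem hwsupp)
          have homw : omegaV w = (R - L).toNat := omegaV_eq w hwsupp
          have homv : omegaV v = (Rv - Lv).toNat := omegaV_eq v hvsupp
          have hmin' : omegaV v ≤ omegaV w := hmin w hw hw0
          have hRvLv : Rv - Lv ≤ R - L := by
            rw [homw, homv] at hmin'; omega
          set c : ℂ := w L / v Lv with hc
          set u : ℤ →₀ ℂ := shiftV v (Lv - L) with hu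
          have hu_span : u ∈ Submodule.span ℂ (Set.range fun n : ℤ => shiftV v n) :=
            Submodule.subset_span ⟨Lv - L, rfl⟩
          set w' : ℤ →₀ ℂ := w - c • u with hw'
          have hw'perp : w' ∈ perp a :=
            Submodule.sub_mem _ hw (Submodule.smul_mem _ c (shift_mem_perp hv _))
          have hw'lo : ∀ i : ℤ, i ≤ L → w' i = 0 := by
            intro i hi
            simp only [hw', Finsupp.sub_apply, Finsupp.smul_apply, hu, shiftV_apply,
              smul_eq_mul]
            rcases lt_or_eq_of_le hi with hlt | heq
            · rw [eq_zero_of_lt_min' w hwsupp i hlt,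
                eq_zero_of_lt_min' v hvsupp _ (by omega), mul_zero, sub_zero]
            · rw [heq]
              have h2 : L + (Lv - L) = Lv := by omega
              rw [h2, hc, div_mul_cancel₀ _ hvLv, sub_self]
          have hw'hi : ∀ i : ℤ, R < i → w' i = 0 := by
            intro i hi
            simp only [hw', Finsupp.sub_apply, Finsupp.smul_apply, hu, shiftV_apply,
              smul_eq_mul]
            rw [eq_zero_of_max'_lt w hwsupp i hi,
              eq_zero_of_max'_lt v hvsupp _ (by omega), mul_zero, sub_zero]
          by_cases hw'0 : w' = 0
          · have : w = c • u := by rw [← sub_eq_zero]; exact hw'0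
            rw [this]
            exact Submodule.smul_mem _ c hu_span
          · have hw'supp : w'.support.Nonempty := Finsupp.support_nonempty_iff.mpr hw'0
            set L' : ℤ := w'.support.min' hw'supp with hL'
            set R' : ℤ := w'.support.max' hw'supp with hR'
            have hLL' : L < L' := by
              by_contra hcon
              push_neg at hcon
              exact Finsupp.mem_support_iff.mp (w'.support.min'_mem hw'supp)
                (hw'lo L' hcon)
            have hR'R : R' ≤ R := by
              by_contra hcon
              push_neg at hcon
              exact Finsupp.mem_support_iff.mp (w'.support.max'_mem hw'supp)
                (hw'hi R' hcon)
            have hL'R' : L' ≤ R' := w'.support.min'_le _ (w'.support.max'_mem hw'supp)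
            have homw' : omegaV w' = (R' - L').toNat := omegaV_eq w' hw'supp
            have hlt : omegaV w' < k := by
              rw [homw']; rw [homw] at hwk; omega
            have hmem := ih (omegaV w') hlt w' hw'perp le_rfl
            have heq2 : w' + c • u = w := by rw [hw']; abel
            rw [← heq2]
            exact Submodule.add_mem _ hmem (Submodule.smul_mem _ c hu_span)
      intro w hw
      exact key (omegaV w) w hw le_rfl
end

section
/- For each real number j > 1, the function a(j) : ℤ → ℂ defined by a(j)_i = 0 for i ≤ 0 and a(j)_i = j^i for i > 0 is strongly generic; that is, the family consisting of all shifts a(j)^{(n)} (n ∈ ℤ) together with the function i ↦ i·a(j)_i is linearly independent over ℂ. -/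
/-- For `j : ℝ`, the function `a(j) : ℤ → ℂ` with `a(j)_i = j^i` for `i > 0`
and `a(j)_i = 0` for `i ≤ 0`. -/
noncomputable def aFun (j : ℝ) : ℤ → ℂ := fun i => if 0 < i then (j : ℂ) ^ i else 0

lemma aFun_pos (j : ℝ) {i : ℤ} (hi : 0 < i) : aFun j i = (j : ℂ) ^ i := if_pos hi

lemma aFun_nonpos (j : ℝ) {i : ℤ} (hi : ¬ 0 < i) : aFun j i = 0 := if_neg hi

/-- For each real `j > 1`, the function `a(j)` is strongly generic: the family
of all its shifts `a(j)^{(n)}` (`n ∈ ℤ`) together with the function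
`i ↦ i * a(j)_i` is linearly independent over `ℂ`. -/
theorem aFun_stronglyGeneric (j : ℝ) (hj : 1 < j) :
    LinearIndependent ℂ
      (Sum.elim
        (fun n : ℤ => fun i : ℤ => aFun j (i + n))
        (fun _ : Unit => fun i : ℤ => (i : ℂ) * aFun j i)) := by
  have hj0 : (0:ℝ) < j := lt_trans one_pos hj
  have hjC : (j : ℂ) ≠ 0 := by
    simpa using ne_of_gt hj0
  have hjz : ∀ i : ℤ, (j : ℂ) ^ i ≠ 0 := fun i => zpow_ne_zero i hjC
  rw [linearIndependent_iff'']
  intro s g hg hsum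
  -- split the sum
  set T : Finset ℤ := s.toLeft with hT
  set c : ℤ → ℂ := fun n => g (Sum.inl n) with hc
  set d : ℂ := g (Sum.inr ()) with hd
  have key : ∀ i : ℤ, (∑ n ∈ T, c n * aFun j (i + n)) + d * ((i : ℂ) * aFun j i) = 0 := by
    intro i
    have := congrFun hsum i
    rw [← Finset.toLeft_disjSum_toRight (u := s)] at this
    rw [Finset.sum_disjSum] at this
    simp only [Finset.sum_apply, Pi.add_apply, Pi.zero_apply, Pi.smul_apply,
      Sum.elim_inl, Sum.elim_inr, smul_eq_mul] at this
    rcases Finset.eq_empty_or_nonempty s.toRight with he | hne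
    · rw [he, Finset.sum_empty, add_zero] at this
      have hd0 : d = 0 := by
        by_cases h : Sum.inr () ∈ s
        · exfalso
          have : () ∈ s.toRight := Finset.mem_toRight.2 h
          rw [he] at this; exact absurd this (Finset.notMem_empty _)
        · exact hg _ h
      rw [hd0, zero_mul, add_zero]
      exact this
    · have hu : s.toRight = {()} := by
        apply Finset.eq_singleton_iff_nonempty_unique_mem.2
        exact ⟨hne, fun x _ => rfl⟩
      rw [hu, Finset.sum_singleton] at this
      exact this
  -- Step 1: d = 0
  have hN : ∃ N : ℤ, 1 ≤ N ∧ ∀ n ∈ T, 0 < N + n := by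
    refine ⟨1 + ∑ n ∈ T, |n|, by have : (0:ℤ) ≤ ∑ n ∈ T, |n| := Finset.sum_nonneg fun m _ => abs_nonneg m; omega, ?_⟩
    intro n hn
    have h1 : |n| ≤ ∑ m ∈ T, |m| :=
      Finset.single_le_sum (fun m _ => abs_nonneg m) hn
    have h2 : -n ≤ |n| := neg_le_abs n
    omega
  obtain ⟨N, hN1, hNT⟩ := hN
  have eval : ∀ i : ℤ, 0 < i → (∀ n ∈ T, 0 < i + n) →
      (∑ n ∈ T, c n * (j:ℂ) ^ n) + d * i = 0 := by
    intro i hi hiT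
    have h := key i
    have hrw : ∀ n ∈ T, c n * aFun j (i + n) = (c n * (j:ℂ)^n) * (j:ℂ)^i := by
      intro n hn
      rw [aFun_pos j (hiT n hn), zpow_add₀ hjC]
      ring
    rw [Finset.sum_congr rfl hrw, ← Finset.sum_mul, aFun_pos j hi] at h
    have h' : ((∑ n ∈ T, c n * (j:ℂ)^n) + d * i) * (j:ℂ)^i = 0 := by
      rw [add_mul]; rw [← h]; ring
    exact (mul_eq_zero.1 h').resolve_right (hjz i)
  have hd0 : d = 0 := by
    have e1 := eval N (by omega) hNT
    have e2 := eval (N + 1) (by omega) (fun n hn => by have := hNT n hn; omega)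
    have : d * (N + 1) - d * N = 0 := by
      push_cast at e1 e2 ⊢
      linear_combination e2 - e1
    have : d * ((N:ℂ) + 1) - d * N = d := by ring
    push_cast at e1 e2
    linear_combination e2 - e1
  -- Step 2: all c n = 0 for n ∈ T, by strong induction on number of larger elements
  have hcT : ∀ k : ℕ, ∀ n ∈ T, (T.filter (fun m => n < m)).card = k → c n = 0 := by
    intro k
    induction k using Nat.strong_induction_on with
    | _ k ih =>
      intro n hn hcard
      -- coefficients above n vanish
      have above : ∀ m ∈ T, n < m → c m = 0 := by
        intro m hm hnm
        refine ih (T.filter (fun p => m < p)).card ?_ m hm rfl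
        rw [← hcard]
        apply Finset.card_lt_card
        constructor
        · intro p hp
          simp only [Finset.mem_filter] at hp ⊢
          exact ⟨hp.1, lt_trans hnm hp.2⟩
        · intro hsub
          have : m ∈ T.filter (fun p => m < p) :=
            hsub (Finset.mem_filter.2 ⟨hm, hnm⟩)
          simp at this
      have h := key (1 - n)
      rw [hd0, zero_mul, add_zero] at h
      have hsingle : ∑ m ∈ T, c m * aFun j (1 - n + m) = c n * aFun j (1 - n + n) := by
        apply Finset.sum_eq_single n
        · intro m hm hmn
          rcases lt_or_gt_of_ne hmn with hlt | hgt
          · rw [aFun_nonpos j (by omega), mul_zero]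
          · rw [above m hm hgt, zero_mul]
        · intro hns; exact absurd hn hns
      rw [hsingle] at h
      have : 1 - n + n = 1 := by ring
      rw [this, aFun_pos j one_pos, zpow_one] at h
      exact (mul_eq_zero.1 h).resolve_right hjC
  -- conclude
  intro k
  match k with
  | Sum.inl n =>
    by_cases h : n ∈ T
    · exact hcT _ n h rfl
    · exact hg _ (fun hs => h (Finset.mem_toLeft.2 hs))
  | Sum.inr u =>
    have : u = () := rfl
    rw [this]; exact hd0
end
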